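/- Fix ℏ > 0, σ > 0, γ > 0, g > 0 and p₀, q₀ ∈ ℝ; set β = 2σ²/g. For t, ω ∈ ℝ let sh(t,ω) = sinh(ωt)/ω for ω ≠ 0 with sh(t,0) = t, and ch(t,ω) = (cosh(ωt) − 1)/ω² for ω ≠ 0 with ch(t,0) = t²/2. Writing ω = σγη, define u(t,η) = cosh(ωt) + (ω²/β)·sh(t,ω), v(t,η) = cosh(ωt) + β·sh(t,ω), a(t,η) = g·v/u, P(t,η) = p₀/u, Q(t,η) = −η·(β·ch(t,ω) + sh(t,ω))/v, φ(t,η) = β·p₀·η·ch(t,ω)/v, D(t,η) = (1/(2γ²))·(t·v − sh(t,ω) − 2β·ch(t,ω))/v + (γ²η²p₀²/2)·sh(t,ω)/u, and χ(t,ξ,η) = u(t,η)^{−1/2}·exp(−D(t,η)/ℏ)·exp((i/ℏ)(φ(t,η) + q₀·η + P(t,η)·(ξ − Q(t,η))))·exp(−η²/(4ℏg) − a(t,η)·(ξ − Q(t,η))²/(4ℏ)). Then for every t ≥ 0: the function ξ ↦ χ(t,ξ,0) has complex derivative (i/ℏ)·p₀ at ξ = 0, and the function η ↦ χ(t,0,η)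 has complex derivative (i/ℏ)·(q₀ + t·p₀) at η = 0. Equivalently, the momentum and position expectation values of the evolved state are ⟨p̂⟩ₜ = p₀ and ⟨q̂⟩ₜ = q₀ + t·p₀. -/

import Mathlib

open Real Filter Topology


private lemma nonneg_of_deriv (f f' : ℝ → ℝ) (hd : ∀ x, HasDerivAt f (f' x) x)
    (hp : ∀ x, 0 ≤ x → 0 ≤ f' x) (h0 : f 0 = 0) : ∀ x, 0 ≤ x → 0 ≤ f x := by
  intro x hx
  have hmono : MonotoneOn f (Set.Ici 0) := by
    apply monotoneOn_of_deriv_nonneg (convex_Ici 0)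
    · exact fun y _ => (hd y).continuousAt.continuousWithinAt
    · exact fun y _ => (hd y).differentiableAt.differentiableWithinAt
    · intro y hy
      rw [(hd y).deriv]
      exact hp y (le_of_lt (by simpa using hy))
  simpa [h0] using hmono Set.self_mem_Ici hx hx

private lemma coshm1 (x : ℝ) (hx : 0 ≤ x) : Real.cosh x - 1 ≤ x * Real.sinh x := by
  have h := nonneg_of_deriv (fun x => x * Real.sinh x - Real.cosh x + 1)
    (fun x => x * Real.cosh x)
    (fun x => by
      have h1 : HasDerivAt (fun x : ℝ => x * Real.sinh x) (1 * Real.sinh x + x * Real.cosh x) x :=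
        (hasDerivAt_id x).fun_mul (Real.hasDerivAt_sinh x)
      have h2 := (h1.fun_sub (Real.hasDerivAt_cosh x)).add_const 1
      refine h2.congr_deriv ?_; ring)
    (fun x hx => mul_nonneg hx (Real.cosh_pos x).le)
    (by simp) x hx
  have h0 : 0 ≤ x * Real.sinh x - Real.cosh x + 1 := by simpa using h
  linarith

private lemma sinh_sub_le (x : ℝ) (hx : 0 ≤ x) : Real.sinh x - x ≤ x ^ 2 * Real.sinh x := by
  have h := nonneg_of_deriv (fun x => x ^ 2 * Real.sinh x - Real.sinh x + x)
    (fun x => 2 * x * Real.sinh x + x ^ 2 * Real.cosh x - Real.cosh x + 1)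
    (fun x => by
      have h1 : HasDerivAt (fun x : ℝ => x ^ 2 * Real.sinh x)
          (((2 : ℕ) : ℝ) * x ^ (2 - 1) * Real.sinh x + x ^ 2 * Real.cosh x) x :=
        ((hasDerivAt_pow 2 x)).fun_mul (Real.hasDerivAt_sinh x)
      have h2 := (h1.fun_sub (Real.hasDerivAt_sinh x)).fun_add (hasDerivAt_id x)
      refine h2.congr_deriv ?_; push_cast; ring)
    (fun x hx => by
      have h1 := coshm1 x hx
      have h2 : 0 ≤ Real.sinh x := Real.sinh_nonneg_iff.2 hx
      have h3 : 0 ≤ x ^ 2 * Real.cosh x := by positivity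
      have h4 : 0 ≤ x * Real.sinh x := mul_nonneg hx h2
      show 0 ≤ 2 * x * Real.sinh x + x ^ 2 * Real.cosh x - Real.cosh x + 1
      nlinarith)
    (by simp) x hx
  have h0 : 0 ≤ x ^ 2 * Real.sinh x - Real.sinh x + x := by simpa using h
  linarith

private lemma cosh_taylor_le (x : ℝ) (hx : 0 ≤ x) :
    Real.cosh x - 1 - x ^ 2 / 2 ≤ x ^ 3 * Real.sinh x := by
  have key := nonneg_of_deriv (fun x => x * Real.sinh x - x ^ 2 / 2 - Real.cosh x + 1)
    (fun x => x * (Real.cosh x - 1))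
    (fun x => by
      have h1 : HasDerivAt (fun x : ℝ => x * Real.sinh x) (1 * Real.sinh x + x * Real.cosh x) x :=
        (hasDerivAt_id x).fun_mul (Real.hasDerivAt_sinh x)
      have h2 : HasDerivAt (fun x : ℝ => x ^ 2 / 2) (((2:ℕ):ℝ) * x ^ (2-1) / 2) x :=
        (hasDerivAt_pow 2 x).div_const 2
      have h3 := ((h1.fun_sub h2).fun_sub (Real.hasDerivAt_cosh x)).add_const 1
      refine h3.congr_deriv ?_; push_cast; ring)
    (fun x hx => mul_nonneg hx (by linarith [Real.one_le_cosh x]))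
    (by simp) x hx
  have h0 : 0 ≤ x * Real.sinh x - x ^ 2 / 2 - Real.cosh x + 1 := by simpa using key
  have h4 := sinh_sub_le x hx
  have h5 : x * (Real.sinh x - x) ≤ x * (x ^ 2 * Real.sinh x) :=
    mul_le_mul_of_nonneg_left h4 hx
  nlinarith

private lemma cosh_taylor_nonneg (x : ℝ) : 0 ≤ Real.cosh x - 1 - x ^ 2 / 2 := by
  have key : ∀ y : ℝ, 0 ≤ y → 0 ≤ Real.cosh y - 1 - y ^ 2 / 2 := by
    intro y hy
    have h := nonneg_of_deriv (fun x => Real.cosh x - 1 - x ^ 2 / 2)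
      (fun x => Real.sinh x - x)
      (fun x => by
        have h2 : HasDerivAt (fun x : ℝ => x ^ 2 / 2) (((2:ℕ):ℝ) * x ^ (2-1) / 2) x :=
          (hasDerivAt_pow 2 x).div_const 2
        have h3 := ((Real.hasDerivAt_cosh x).sub_const 1).fun_sub h2
        refine h3.congr_deriv ?_; push_cast; ring)
      (fun x hx => by
        have := Real.self_le_sinh_iff.2 hx
        show 0 ≤ Real.sinh x - x
        linarith)
      (by simp) y hy
    simpa using h
  rcases le_or_gt 0 x with h | h
  · exact key x h
  · have := key (-x) (by linarith)
    simpa using this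

private lemma abs_sinh_sub_le (s : ℝ) : |Real.sinh s - s| ≤ s ^ 2 * Real.sinh |s| := by
  rcases le_or_gt 0 s with h | h
  · rw [abs_of_nonneg h, abs_of_nonneg (by linarith [Real.self_le_sinh_iff.2 h] :
      (0:ℝ) ≤ Real.sinh s - s)]
    exact sinh_sub_le s h
  · have h2 : 0 ≤ -s := by linarith
    have h3 := sinh_sub_le (-s) h2
    have h4 := Real.self_le_sinh_iff.2 h2
    rw [abs_of_neg h]
    rw [abs_of_nonpos (by simp only [Real.sinh_neg] at h4 ⊢; linarith : Real.sinh s - s ≤ 0)]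
    rw [Real.sinh_neg]
    simp only [Real.sinh_neg] at h3
    nlinarith

private lemma abs_cosh_sub_le (s : ℝ) :
    |Real.cosh s - 1 - s ^ 2 / 2| ≤ |s| ^ 3 * Real.sinh |s| := by
  rw [abs_of_nonneg (cosh_taylor_nonneg s)]
  rcases le_or_gt 0 s with h | h
  · rw [abs_of_nonneg h]; exact cosh_taylor_le s h
  · rw [abs_of_neg h]
    have := cosh_taylor_le (-s) (by linarith)
    simpa using this

private lemma tendsto_abs_sinh : Tendsto (fun s : ℝ => Real.sinh |s|) (𝓝[≠] (0:ℝ)) (𝓝 0) := by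
  have : Continuous fun s : ℝ => Real.sinh |s| := Real.continuous_sinh.comp continuous_abs
  have h := this.tendsto 0
  simp only [abs_zero, Real.sinh_zero] at h
  exact h.mono_left nhdsWithin_le_nhds

private lemma tendsto_sinh_slope :
    Tendsto (fun s : ℝ => (Real.sinh s - s) / s ^ 2) (𝓝[≠] (0:ℝ)) (𝓝 0) := by
  apply squeeze_zero_norm (a := fun s : ℝ => Real.sinh |s|) _ tendsto_abs_sinh
  intro s
  rcases eq_or_ne s 0 with rfl | hs
  · simp
  · rw [Real.norm_eq_abs, abs_div]
    rw [div_le_iff₀ (by positivity)]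
    calc |Real.sinh s - s| ≤ s ^ 2 * Real.sinh |s| := abs_sinh_sub_le s
      _ = Real.sinh |s| * |s ^ 2| := by rw [abs_of_nonneg (sq_nonneg s)]; ring

private lemma tendsto_cosh_slope :
    Tendsto (fun s : ℝ => (Real.cosh s - 1 - s ^ 2 / 2) / s ^ 3) (𝓝[≠] (0:ℝ)) (𝓝 0) := by
  apply squeeze_zero_norm (a := fun s : ℝ => Real.sinh |s|) _ tendsto_abs_sinh
  intro s
  rcases eq_or_ne s 0 with rfl | hs
  · simp
  · rw [Real.norm_eq_abs, abs_div]
    rw [div_le_iff₀ (by positivity)]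
    calc |Real.cosh s - 1 - s ^ 2 / 2| ≤ |s| ^ 3 * Real.sinh |s| := abs_cosh_sub_le s
      _ = Real.sinh |s| * |s ^ 3| := by rw [abs_pow]; ring

private lemma tendsto_lin_punct (k t : ℝ) (hk : k ≠ 0) (ht : t ≠ 0) :
    Tendsto (fun η : ℝ => k * η * t) (𝓝[≠] (0:ℝ)) (𝓝[≠] (0:ℝ)) := by
  apply tendsto_nhdsWithin_of_tendsto_nhds_of_eventually_within
  · have : Continuous fun η : ℝ => k * η * t := by continuity
    have h := this.tendsto 0
    simp only [mul_zero, zero_mul] at h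
    exact h.mono_left nhdsWithin_le_nhds
  · filter_upwards [self_mem_nhdsWithin] with η hη
    exact mul_ne_zero (mul_ne_zero hk hη) ht

private lemma hasDerivAt_sh_aux (sh : ℝ → ℝ → ℝ)
    (hsh : ∀ t ω, sh t ω = if ω = 0 then t else Real.sinh (ω * t) / ω)
    (k t : ℝ) (hk : k ≠ 0) :
    HasDerivAt (fun η => sh t (k * η)) 0 0 := by
  rcases eq_or_ne t 0 with rfl | ht
  · have he : (fun η => sh 0 (k * η)) = fun _ => (0:ℝ) := by
      funext η; rw [hsh]; split <;> simp
    rw [he]; exact hasDerivAt_const 0 0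
  · rw [hasDerivAt_iff_tendsto_slope]
    have key : ∀ᶠ η in 𝓝[≠] (0:ℝ), (k * t ^ 2) * ((Real.sinh (k * η * t) - k * η * t) / (k * η * t) ^ 2)
        = slope (fun η => sh t (k * η)) 0 η := by
      filter_upwards [self_mem_nhdsWithin] with η hη
      have hη0 : η ≠ 0 := hη
      rw [slope_def_field]
      rw [hsh, hsh]
      rw [if_neg (mul_ne_zero hk hη0), if_pos (by ring : k * 0 = 0)]
      field_simp
      ring
    have h2 : Tendsto (fun η : ℝ => (k * t ^ 2) *
        ((Real.sinh (k * η * t) - k * η * t) / (k * η * t) ^ 2)) (𝓝[≠] (0:ℝ)) (𝓝 0) := by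
      have := (tendsto_sinh_slope.comp (tendsto_lin_punct k t hk ht)).const_mul (k * t ^ 2)
      simpa using this
    exact h2.congr' key

private lemma hasDerivAt_ch_aux (ch : ℝ → ℝ → ℝ)
    (hch : ∀ t ω, ch t ω = if ω = 0 then t ^ 2 / 2 else (Real.cosh (ω * t) - 1) / ω ^ 2)
    (k t : ℝ) (hk : k ≠ 0) :
    HasDerivAt (fun η => ch t (k * η)) 0 0 := by
  rcases eq_or_ne t 0 with rfl | ht
  · have he : (fun η => ch 0 (k * η)) = fun _ => (0:ℝ) := by
      funext η; rw [hch]; split <;> simp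
    rw [he]; exact hasDerivAt_const 0 0
  · rw [hasDerivAt_iff_tendsto_slope]
    have key : ∀ᶠ η in 𝓝[≠] (0:ℝ), (k * t ^ 3) *
        ((Real.cosh (k * η * t) - 1 - (k * η * t) ^ 2 / 2) / (k * η * t) ^ 3)
        = slope (fun η => ch t (k * η)) 0 η := by
      filter_upwards [self_mem_nhdsWithin] with η hη
      have hη0 : η ≠ 0 := hη
      rw [slope_def_field]
      rw [hch, hch]
      rw [if_neg (mul_ne_zero hk hη0), if_pos (by ring : k * 0 = 0)]
      field_simp
      ring
    have h2 : Tendsto (fun η : ℝ => (k * t ^ 3) *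
        ((Real.cosh (k * η * t) - 1 - (k * η * t) ^ 2 / 2) / (k * η * t) ^ 3))
        (𝓝[≠] (0:ℝ)) (𝓝 0) := by
      have := (tendsto_cosh_slope.comp (tendsto_lin_punct k t hk ht)).const_mul (k * t ^ 3)
      simpa using this
    exact h2.congr' key

/-- First moments of the evolved state: the characteristic function
`χ(t,ξ,η)` of the evolved Gaussian state satisfies
`∂_ξ χ(t,0,0) = (i/ℏ)p₀` and `∂_η χ(t,0,0) = (i/ℏ)(q₀ + tp₀)`,
i.e. `⟨p̂⟩ₜ = p₀` and `⟨q̂⟩ₜ = q₀ + t·p₀`. -/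
theorem stmt11 (hbar σ γ g p₀ q₀ : ℝ)
    (hhbar : 0 < hbar) (hσ : 0 < σ) (hγ : 0 < γ) (hg : 0 < g)
    (β : ℝ) (hβ : β = 2 * σ ^ 2 / g)
    (sh ch : ℝ → ℝ → ℝ)
    (hsh : ∀ t ω, sh t ω = if ω = 0 then t else Real.sinh (ω * t) / ω)
    (hch : ∀ t ω, ch t ω = if ω = 0 then t ^ 2 / 2 else (Real.cosh (ω * t) - 1) / ω ^ 2)
    (u v a P Q φ D : ℝ → ℝ → ℝ) (χ : ℝ → ℝ → ℝ → ℂ)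
    (hu : ∀ t η, u t η = Real.cosh (σ * γ * η * t) + ((σ * γ * η) ^ 2 / β) * sh t (σ * γ * η))
    (hv : ∀ t η, v t η = Real.cosh (σ * γ * η * t) + β * sh t (σ * γ * η))
    (ha : ∀ t η, a t η = g * v t η / u t η)
    (hP : ∀ t η, P t η = p₀ / u t η)
    (hQ : ∀ t η, Q t η = -η * (β * ch t (σ * γ * η) + sh t (σ * γ * η)) / v t η)
    (hφ : ∀ t η, φ t η = β * p₀ * η * ch t (σ * γ * η) / v t η)
    (hD : ∀ t η, D t η =
      (1 / (2 * γ ^ 2)) *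
          ((t * v t η - sh t (σ * γ * η) - 2 * β * ch t (σ * γ * η)) / v t η)
        + (γ ^ 2 * η ^ 2 * p₀ ^ 2 / 2) * (sh t (σ * γ * η) / u t η))
    (hχ : ∀ t ξ η, χ t ξ η =
      ((Real.sqrt (u t η))⁻¹ : ℝ) * Complex.exp (-(D t η : ℂ) / (hbar : ℂ)) *
        Complex.exp ((Complex.I / (hbar : ℂ)) *
          ((φ t η + q₀ * η + P t η * (ξ - Q t η) : ℝ) : ℂ)) *
        Complex.exp (((-(η ^ 2 / (4 * hbar * g)) - a t η * (ξ - Q t η) ^ 2 / (4 * hbar) : ℝ) : ℂ))) :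
    ∀ t ≥ 0,
      HasDerivAt (fun ξ => χ t ξ 0) (Complex.I / (hbar : ℂ) * (p₀ : ℂ)) 0 ∧
      HasDerivAt (fun η => χ t 0 η) (Complex.I / (hbar : ℂ) * ((q₀ + t * p₀ : ℝ) : ℂ)) 0 := by
  intro t ht
  have hk : σ * γ ≠ 0 := by positivity
  have hβpos : 0 < β := by rw [hβ]; positivity
  have hvtpos : (0:ℝ) < 1 + β * t := by nlinarith
  -- values at 0
  have hS0 : sh t 0 = t := by simp [hsh]
  have hC0 : ch t 0 = t ^ 2 / 2 := by simp [hch]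
  have hu0 : u t 0 = 1 := by simp [hu]
  have hv0 : v t 0 = 1 + β * t := by simp [hv, hS0]
  have hune : u t 0 ≠ 0 := by rw [hu0]; norm_num
  have hvne : v t 0 ≠ 0 := by rw [hv0]; exact ne_of_gt hvtpos
  have hS0' : sh t (σ * γ * 0) = t := by rw [mul_zero, hS0]
  have hC0' : ch t (σ * γ * 0) = t ^ 2 / 2 := by rw [mul_zero, hC0]
  have hQ0 : Q t 0 = 0 := by simp [hQ]
  have hφ0 : φ t 0 = 0 := by simp [hφ]
  have hP0 : P t 0 = p₀ := by rw [hP, hu0, div_one]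
  have hD0 : D t 0 = 0 := by
    rw [hD, hv0, hS0', hC0']
    have hz : t * (1 + β * t) - t - 2 * β * (t ^ 2 / 2) = 0 := by ring
    rw [hz]
    simp
  have ha0 : a t 0 = g * (1 + β * t) := by rw [ha, hv0, hu0, div_one]
  constructor
  · -- ξ-derivative
    have hfun1 : (fun ξ => χ t ξ 0) = fun ξ : ℝ =>
        Complex.exp ((Complex.I / (hbar : ℂ)) * ((p₀ * ξ : ℝ) : ℂ)) *
        Complex.exp (((-(g * (1 + β * t) * ξ ^ 2 / (4 * hbar)) : ℝ) : ℂ)) := by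
      funext ξ
      rw [hχ, hu0, hD0, hφ0, hP0, hQ0, ha0]
      norm_num
    rw [hfun1]
    have hw : HasDerivAt (fun ξ : ℝ => p₀ * ξ) p₀ 0 := by
      simpa using (hasDerivAt_id (0:ℝ)).const_mul p₀
    have hE : HasDerivAt (fun ξ : ℝ =>
        Complex.exp ((Complex.I / (hbar : ℂ)) * ((p₀ * ξ : ℝ) : ℂ)))
        (Complex.I / (hbar : ℂ) * (p₀ : ℂ)) 0 := by
      have := ((hw.ofReal_comp).const_mul (Complex.I / (hbar : ℂ))).cexp
      simpa using this
    have hF : HasDerivAt (fun ξ : ℝ =>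
        Complex.exp (((-(g * (1 + β * t) * ξ ^ 2 / (4 * hbar)) : ℝ) : ℂ))) 0 0 := by
      have hr : HasDerivAt (fun ξ : ℝ => -(g * (1 + β * t) * ξ ^ 2 / (4 * hbar))) 0 0 := by
        have := (((hasDerivAt_pow 2 (0:ℝ)).const_mul (g * (1 + β * t))).div_const (4 * hbar)).fun_neg
        simpa using this
      have := (hr.ofReal_comp).cexp
      simpa using this
    have := hE.fun_mul hF
    simpa using this
  · -- η-derivative
    have hS : HasDerivAt (fun η => sh t (σ * γ * η)) 0 0 := hasDerivAt_sh_aux sh hsh (σ * γ) t hk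
    have hC : HasDerivAt (fun η => ch t (σ * γ * η)) 0 0 := hasDerivAt_ch_aux ch hch (σ * γ) t hk
    have hlin : HasDerivAt (fun η : ℝ => σ * γ * η) (σ * γ) 0 := by
      simpa using (hasDerivAt_id (0:ℝ)).const_mul (σ * γ)
    have hK : HasDerivAt (fun η : ℝ => Real.cosh (σ * γ * η * t)) 0 0 := by
      have hlin2 : HasDerivAt (fun η : ℝ => σ * γ * η * t) (σ * γ * t) 0 := hlin.mul_const t
      have := (Real.hasDerivAt_cosh (σ * γ * 0 * t)).comp 0 hlin2
      simpa [Function.comp_def] using this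
    have hU : HasDerivAt (fun η => u t η) 0 0 := by
      have hq : HasDerivAt (fun η : ℝ => (σ * γ * η) ^ 2 / β) 0 0 := by
        have := (hlin.fun_pow 2).div_const β
        simpa using this
      have h2 : HasDerivAt (fun η : ℝ => ((σ * γ * η) ^ 2 / β) * sh t (σ * γ * η)) 0 0 := by
        have := hq.fun_mul hS
        simpa using this
      have h3 := hK.fun_add h2
      exact HasDerivAt.congr_of_eventuallyEq (by simpa using h3)
        (Filter.Eventually.of_forall (fun η => hu t η))
    have hV : HasDerivAt (fun η => v t η) 0 0 := by
      have h2 : HasDerivAt (fun η : ℝ => β * sh t (σ * γ * η)) 0 0 := by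
        simpa using hS.const_mul β
      have h3 := hK.fun_add h2
      exact HasDerivAt.congr_of_eventuallyEq (by simpa using h3)
        (Filter.Eventually.of_forall (fun η => hv t η))
    -- Q
    have hQd : HasDerivAt (fun η => Q t η) (-(β * (t ^ 2 / 2) + t) / (1 + β * t)) 0 := by
      have hneg : HasDerivAt (fun η : ℝ => -η) (-1) 0 := (hasDerivAt_id (0:ℝ)).fun_neg
      have hsum : HasDerivAt (fun η : ℝ => β * ch t (σ * γ * η) + sh t (σ * γ * η)) 0 0 := by
        simpa using (hC.const_mul β).fun_add hS
      have hnum := hneg.fun_mul hsum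
      have hdiv := hnum.fun_div hV hvne
      refine HasDerivAt.congr_of_eventuallyEq (by refine hdiv.congr_deriv ?_ ; rw [hv0, hC0', hS0'] ; field_simp ; ring)
        (Filter.Eventually.of_forall (fun η => hQ t η))
    -- P
    have hPd : HasDerivAt (fun η => P t η) 0 0 := by
      have h := (hasDerivAt_const (0:ℝ) p₀).fun_div hU hune
      exact HasDerivAt.congr_of_eventuallyEq (by simpa using h)
        (Filter.Eventually.of_forall (fun η => hP t η))
    -- φ
    have hφd : HasDerivAt (fun η => φ t η) (β * p₀ * (t ^ 2 / 2) / (1 + β * t)) 0 := by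
      have hlin3 : HasDerivAt (fun η : ℝ => β * p₀ * η) (β * p₀) 0 := by
        simpa using (hasDerivAt_id (0:ℝ)).const_mul (β * p₀)
      have hnum := hlin3.fun_mul hC
      have hdiv := hnum.fun_div hV hvne
      refine HasDerivAt.congr_of_eventuallyEq (by refine hdiv.congr_deriv ?_ ; rw [hv0, hC0'] ; field_simp ; ring)
        (Filter.Eventually.of_forall (fun η => hφ t η))
    -- D
    have hDd : HasDerivAt (fun η => D t η) 0 0 := by
      have hN : HasDerivAt (fun η : ℝ => t * v t η - sh t (σ * γ * η) - 2 * β * ch t (σ * γ * η)) 0 0 := by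
        simpa using ((hV.const_mul t).fun_sub hS).fun_sub (hC.const_mul (2 * β))
      have hN0 : t * v t 0 - sh t (σ * γ * 0) - 2 * β * ch t (σ * γ * 0) = 0 := by
        rw [hv0, hS0', hC0']; ring
      have h1 : HasDerivAt (fun η : ℝ => (1 / (2 * γ ^ 2)) *
          ((t * v t η - sh t (σ * γ * η) - 2 * β * ch t (σ * γ * η)) / v t η)) 0 0 := by
        have := (hN.fun_div hV hvne).const_mul (1 / (2 * γ ^ 2))
        refine this.congr_deriv ?_
        rw [hN0]
        simp
      have h2 : HasDerivAt (fun η : ℝ => (γ ^ 2 * η ^ 2 * p₀ ^ 2 / 2) * (sh t (σ * γ * η) / u t η)) 0 0 := by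
        have hc : HasDerivAt (fun η : ℝ => γ ^ 2 * η ^ 2 * p₀ ^ 2 / 2) 0 0 := by
          have := (((hasDerivAt_pow 2 (0:ℝ)).const_mul (γ ^ 2)).mul_const (p₀ ^ 2)).div_const 2
          simpa using this
        have := hc.fun_mul (hS.fun_div hU hune)
        simpa using this
      have h3 := h1.fun_add h2
      exact HasDerivAt.congr_of_eventuallyEq (by simpa using h3)
        (Filter.Eventually.of_forall (fun η => hD t η))
    -- a
    have hAd := HasDerivAt.congr_of_eventuallyEq ((hV.const_mul g).fun_div hU hune)
        (Filter.Eventually.of_forall (fun η => ha t η))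
    -- factor 1
    have hF1 : HasDerivAt (fun η : ℝ => (((Real.sqrt (u t η))⁻¹ : ℝ) : ℂ)) 0 0 := by
      have hsq : HasDerivAt (fun η : ℝ => Real.sqrt (u t η)) 0 0 := by
        have := (Real.hasDerivAt_sqrt hune).comp 0 hU
        simpa [Function.comp_def] using this
      have hsqne : Real.sqrt (u t 0) ≠ 0 := by rw [hu0]; simp
      have hinv : HasDerivAt (fun η : ℝ => (Real.sqrt (u t η))⁻¹) 0 0 := by
        simpa using hsq.fun_inv hsqne
      simpa using hinv.ofReal_comp
    -- factor 2
    have hF2 : HasDerivAt (fun η : ℝ => Complex.exp (-((D t η : ℝ) : ℂ) / (hbar : ℂ))) 0 0 := by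
      have hin : HasDerivAt (fun η : ℝ => -((D t η : ℝ) : ℂ) / (hbar : ℂ)) 0 0 := by
        have := (hDd.ofReal_comp.fun_neg).div_const (hbar : ℂ)
        simpa using this
      have := hin.cexp
      simpa using this
    -- factor 3
    have hsub : HasDerivAt (fun η : ℝ => (0:ℝ) - Q t η)
        (0 - -(β * (t ^ 2 / 2) + t) / (1 + β * t)) 0 := (hasDerivAt_const (0:ℝ) (0:ℝ)).fun_sub hQd
    have hw : HasDerivAt (fun η : ℝ => φ t η + q₀ * η + P t η * (0 - Q t η)) (q₀ + t * p₀) 0 := by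
      have hq₀ : HasDerivAt (fun η : ℝ => q₀ * η) q₀ 0 := by
        simpa using (hasDerivAt_id (0:ℝ)).const_mul q₀
      have hPQ := hPd.fun_mul hsub
      have := (hφd.fun_add hq₀).fun_add hPQ
      refine this.congr_deriv ?_
      rw [hQ0, hP0]
      field_simp
      ring
    have hF3 : HasDerivAt (fun η : ℝ => Complex.exp ((Complex.I / (hbar : ℂ)) *
        ((φ t η + q₀ * η + P t η * (0 - Q t η) : ℝ) : ℂ)))
        (Complex.I / (hbar : ℂ) * ((q₀ + t * p₀ : ℝ) : ℂ)) 0 := by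
      have := ((hw.ofReal_comp).const_mul (Complex.I / (hbar : ℂ))).cexp
      have hval : φ t 0 + q₀ * 0 + P t 0 * (0 - Q t 0) = 0 := by
        rw [hφ0, hQ0, hP0]; ring
      rw [hval] at this
      simpa using this
    -- factor 4
    have hF4 : HasDerivAt (fun η : ℝ =>
        Complex.exp (((-(η ^ 2 / (4 * hbar * g)) - a t η * (0 - Q t η) ^ 2 / (4 * hbar) : ℝ) : ℂ))) 0 0 := by
      have h4a : HasDerivAt (fun η : ℝ => -(η ^ 2 / (4 * hbar * g))) 0 0 := by
        have := ((hasDerivAt_pow 2 (0:ℝ)).div_const (4 * hbar * g)).fun_neg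
        simpa using this
      have h4b : HasDerivAt (fun η : ℝ => a t η * (0 - Q t η) ^ 2 / (4 * hbar)) 0 0 := by
        have := (hAd.fun_mul (hsub.fun_pow 2)).div_const (4 * hbar)
        refine this.congr_deriv ?_
        rw [hQ0]
        simp
      have hr := h4a.fun_sub h4b
      have hin := (hr.ofReal_comp).cexp
      simpa using hin
    -- assemble
    have hprod := ((hF1.fun_mul hF2).fun_mul hF3).fun_mul hF4
    refine HasDerivAt.congr_of_eventuallyEq ?_ (Filter.Eventually.of_forall (fun η => hχ t 0 η))
    refine hprod.congr_deriv ?_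
    rw [hu0, hD0, hQ0, ha0]
    have hval : φ t 0 + q₀ * 0 + P t 0 * (0 - Q t 0) = 0 := by
      rw [hφ0, hQ0, hP0]; ring
    rw [hφ0, hP0]
    norm_num [Real.sqrt_one]
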